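/- arXiv:2004.06177 — 6 statements merged into one kernel-verified Lean document; each statement's English description precedes it below -/
import Mathlib

section
/- Let 0 < m < 1 and let u, c be real numbers with 0 ≤ u ≤ c. Then (m/2)·(c − u)·(c^m − u^m) ≤ ∫_u^c (c^m − y^m) dy ≤ (c − u)·(c^m − u^m). -/
open MeasureTheory

theorem stmt_4 (m u c : ℝ) (hm0 : 0 < m) (hm1 : m < 1) (hu : 0 ≤ u) (huc : u ≤ c) :
    (m / 2) * (c - u) * (c ^ m - u ^ m) ≤ (∫ y in u..c, (c ^ m - y ^ m)) ∧
      (∫ y in u..c, (c ^ m - y ^ m)) ≤ (c - u) * (c ^ m - u ^ m) := by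
  rcases eq_or_lt_of_le huc with rfl | hlt
  · simp
  have hc : 0 < c := lt_of_le_of_lt hu hlt
  have hcm : (0:ℝ) < c ^ m := Real.rpow_pos_of_pos hc m
  have hcm1 : c ^ (m - 1) = c ^ m / c := Real.rpow_sub_one hc.ne' m
  have hint : IntervalIntegrable (fun y : ℝ => c ^ m - y ^ m) volume u c := by
    apply IntervalIntegrable.sub intervalIntegrable_const
    exact intervalIntegral.intervalIntegrable_rpow' (by linarith)
  constructor
  · -- lower bound
    have hle : ∀ y ∈ Set.Icc u c, m * c ^ (m - 1) * (c - y) ≤ c ^ m - y ^ m := by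
      intro y hy
      have hy0 : 0 ≤ y := le_trans hu hy.1
      have hs : -1 ≤ y / c - 1 := by
        have : 0 ≤ y / c := div_nonneg hy0 hc.le
        linarith
      have hb := rpow_one_add_le_one_add_mul_self hs hm0.le hm1.le
      have h1 : (y / c) ^ m ≤ 1 + m * (y / c - 1) := by
        have h : (1 : ℝ) + (y / c - 1) = y / c := by ring
        rwa [h] at hb
      have h2 : y ^ m = (y / c) ^ m * c ^ m := by
        rw [Real.div_rpow hy0 hc.le, div_mul_cancel₀ _ hcm.ne']
      rw [hcm1]
      have h3 : y ^ m ≤ (1 + m * (y / c - 1)) * c ^ m := by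
        rw [h2]; exact mul_le_mul_of_nonneg_right h1 hcm.le
      have h4 : m * (c ^ m / c) * (c - y) = (m * (1 - y / c)) * c ^ m := by
        field_simp
      nlinarith [h3]
    have hintl : IntervalIntegrable (fun y : ℝ => m * c ^ (m - 1) * (c - y)) volume u c :=
      (Continuous.intervalIntegrable (by continuity) u c)
    have hmono := intervalIntegral.integral_mono_on huc hintl hint hle
    have hcomp : (∫ y in u..c, m * c ^ (m - 1) * (c - y)) =
        m * c ^ (m - 1) * ((c - u) ^ 2 / 2) := by
      rw [intervalIntegral.integral_const_mul]
      have : (∫ y in u..c, (c - y)) = (c - u) ^ 2 / 2 := by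
        rw [intervalIntegral.integral_sub intervalIntegrable_const
          (intervalIntegral.intervalIntegrable_id),
          intervalIntegral.integral_const, show (∫ x in u..c, x) = (c ^ 2 - u ^ 2) / 2 from integral_id, smul_eq_mul]
        ring
      rw [this]
    rw [hcomp] at hmono
    refine le_trans ?_ hmono
    -- need (m/2)(c-u)(c^m - u^m) ≤ m * c^(m-1) * ((c-u)^2/2)
    have key : c ^ m - u ^ m ≤ c ^ (m - 1) * (c - u) := by
      have h5 : c ^ (m - 1) * c = c ^ m := by rw [hcm1]; field_simp
      have h6 : u * c ^ (m - 1) ≤ u ^ m := by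
        rcases eq_or_lt_of_le hu with rfl | hu'
        · simp [Real.zero_rpow hm0.ne']
        · have : c ^ (m - 1) ≤ u ^ (m - 1) :=
            Real.rpow_le_rpow_of_nonpos hu' huc (by linarith)
          have h7 : u * u ^ (m - 1) = u ^ m := by
            rw [Real.rpow_sub_one hu'.ne' m]; field_simp
          calc u * c ^ (m - 1) ≤ u * u ^ (m - 1) :=
                mul_le_mul_of_nonneg_left this hu
            _ = u ^ m := h7
      nlinarith
    have hcu : 0 ≤ c - u := by linarith
    nlinarith [mul_le_mul_of_nonneg_left key hcu, hm0.le]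
  · -- upper bound
    have hle : ∀ y ∈ Set.Icc u c, c ^ m - y ^ m ≤ c ^ m - u ^ m := by
      intro y hy
      have : u ^ m ≤ y ^ m := Real.rpow_le_rpow hu hy.1 hm0.le
      linarith
    have hmono := intervalIntegral.integral_mono_on huc hint
      intervalIntegrable_const hle
    rwa [intervalIntegral.integral_const, smul_eq_mul] at hmono
end

section
/- Let 0 < m < 1. There exists a constant γ > 0, depending only on m, such that whenever real numbers c, ψ, u satisfy 0 ≤ c ≤ ψ, u ≥ c and u^m ≤ 4·ψ^m − 3·c^m, one has u − c ≤ γ·(ψ − c). -/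
theorem stmt_9 (m : ℝ) (hm0 : 0 < m) (hm1 : m < 1) :
    ∃ γ : ℝ, 0 < γ ∧ ∀ c ψ u : ℝ, 0 ≤ c → c ≤ ψ → c ≤ u →
      u ^ m ≤ 4 * ψ ^ m - 3 * c ^ m → u - c ≤ γ * (ψ - c) := by
  set K : ℝ := (4 : ℝ) ^ (1/m) with hKdef
  have hK0 : 0 < K := Real.rpow_pos_of_pos (by norm_num) _
  have hK1 : 1 ≤ K := by
    have h := Real.rpow_le_rpow_of_exponent_le (show (1:ℝ) ≤ 4 by norm_num)
      (show (0:ℝ) ≤ 1/m by positivity)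
    rw [hKdef, one_div]
    simpa using h
  have hKm : K ^ m = 4 := by
    rw [hKdef, ← Real.rpow_mul (by norm_num : (0:ℝ) ≤ 4),
      one_div_mul_cancel hm0.ne', Real.rpow_one]
  refine ⟨8 * K, by positivity, fun c ψ u hc0 hcψ hcu hmain => ?_⟩
  have hψ0 : 0 ≤ ψ := hc0.trans hcψ
  have hu0 : 0 ≤ u := hc0.trans hcu
  have hψc : 0 ≤ ψ - c := by linarith
  have huc : 0 ≤ u - c := by linarith
  have hcm0 : 0 ≤ c ^ m := Real.rpow_nonneg hc0 m
  have huKψ : u ≤ K * ψ := by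
    have h1 : u ^ m ≤ (K * ψ) ^ m := by
      rw [Real.mul_rpow hK0.le hψ0, hKm]
      linarith
    exact (Real.rpow_le_rpow_iff hu0 (by positivity) hm0).mp h1
  rcases le_or_gt (2 * c) ψ with hcase | hcase
  · -- ψ ≥ 2c
    have h1 : K * ψ ≤ 2 * K * (ψ - c) := by
      nlinarith [mul_nonneg hK0.le (show (0:ℝ) ≤ ψ - 2*c by linarith)]
    have h2 : 2 * K * (ψ - c) ≤ 8 * K * (ψ - c) := by
      nlinarith [mul_nonneg hK0.le hψc]
    linarith
  · -- ψ < 2c, so c > 0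
    have hcpos : 0 < c := by linarith
    have hupos : 0 < u := lt_of_lt_of_le hcpos hcu
    have hu2Kc : u ≤ 2 * K * c := by
      nlinarith [mul_le_mul_of_nonneg_left hcase.le hK0.le]
    -- Bernoulli upper bound for ψ^m
    have hB1 : ψ ^ m ≤ c ^ m * (1 + m * ((ψ - c)/c)) := by
      have hs : (-1 : ℝ) ≤ (ψ - c)/c := by
        have : (0:ℝ) ≤ (ψ - c)/c := div_nonneg hψc hcpos.le
        linarith
      have hber := rpow_one_add_le_one_add_mul_self hs hm0.le hm1.le
      have hpos : (0:ℝ) ≤ 1 + (ψ - c)/c := by linarith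
      have e1 : ψ = c * (1 + (ψ - c)/c) := by field_simp; ring
      calc ψ ^ m = (c * (1 + (ψ - c)/c)) ^ m := by rw [← e1]
        _ = c ^ m * (1 + (ψ - c)/c) ^ m := Real.mul_rpow hcpos.le hpos
        _ ≤ c ^ m * (1 + m * ((ψ - c)/c)) := mul_le_mul_of_nonneg_left hber hcm0
    -- Bernoulli lower bound for u^m
    have hB2 : c ^ m ≤ u ^ m * (1 + m * ((c - u)/u)) := by
      have hs : (-1 : ℝ) ≤ (c - u)/u := (le_div_iff₀ hupos).mpr (by linarith)
      have hber := rpow_one_add_le_one_add_mul_self hs hm0.le hm1.le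
      have hpos : (0:ℝ) ≤ 1 + (c - u)/u := by linarith
      have e1 : c = u * (1 + (c - u)/u) := by field_simp; ring
      calc c ^ m = (u * (1 + (c - u)/u)) ^ m := by rw [← e1]
        _ = u ^ m * (1 + (c - u)/u) ^ m := Real.mul_rpow hupos.le hpos
        _ ≤ u ^ m * (1 + m * ((c - u)/u)) :=
            mul_le_mul_of_nonneg_left hber (Real.rpow_nonneg hupos.le m)
    -- clear denominators
    have hB1' : ψ ^ m * c ≤ c ^ m * (c + m * (ψ - c)) := by
      have h := mul_le_mul_of_nonneg_right hB1 hcpos.le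
      calc ψ ^ m * c ≤ c ^ m * (1 + m * ((ψ - c)/c)) * c := h
        _ = c ^ m * (c + m * (ψ - c)) := by field_simp; try ring
    have hB2' : c ^ m * u ≤ u ^ m * (u + m * (c - u)) := by
      have h := mul_le_mul_of_nonneg_right hB2 hupos.le
      calc c ^ m * u ≤ u ^ m * (1 + m * ((c - u)/u)) * u := h
        _ = u ^ m * (u + m * (c - u)) := by field_simp; try ring
    have hum : c ^ m ≤ u ^ m := Real.rpow_le_rpow hc0 hcu hm0.le
    have hcmpos : 0 < c ^ m := Real.rpow_pos_of_pos hcpos m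
    -- key chain
    have k1a : m * u ^ m * (u - c) ≤ (u ^ m - c ^ m) * u := by linarith [hB2']
    have k1 : m * u ^ m * (u - c) * c ≤ (u ^ m - c ^ m) * u * c := by
      have h := mul_le_mul_of_nonneg_right k1a hcpos.le
      linarith [h]
    have k2 : (u ^ m - c ^ m) * c ≤ 4 * m * c ^ m * (ψ - c) := by
      have hmc : (u ^ m - c ^ m) * c ≤ 4 * (ψ ^ m - c ^ m) * c :=
        mul_le_mul_of_nonneg_right (by linarith) hcpos.le
      linarith [hB1', hmc]
    have k2u : (u ^ m - c ^ m) * c * u ≤ 4 * m * c ^ m * (ψ - c) * u :=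
      mul_le_mul_of_nonneg_right k2 hupos.le
    have key : m * u ^ m * (u - c) * c ≤ 4 * m * c ^ m * (ψ - c) * u := by
      linarith [k1, k2u]
    have hfac : (0:ℝ) ≤ 4 * m * c ^ m * (ψ - c) := by positivity
    have step2 : 4 * m * c ^ m * (ψ - c) * u ≤ 8 * K * m * c ^ m * (ψ - c) * c := by
      have h := mul_le_mul_of_nonneg_left hu2Kc hfac
      linarith [h]
    have step3 : m * c ^ m * (u - c) * c ≤ m * u ^ m * (u - c) * c := by
      have h := mul_le_mul_of_nonneg_left hum
        (show (0:ℝ) ≤ m * (u - c) * c by positivity)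
      linarith [h]
    have final : (u - c) * (m * c ^ m * c) ≤ (8 * K * (ψ - c)) * (m * c ^ m * c) := by
      linarith [key, step2, step3]
    have := le_of_mul_le_mul_right final (by positivity : (0:ℝ) < m * c ^ m * c)
    linarith
end

section
/- Let 0 < m < 1. There exists a constant γ > 0, depending only on m, such that for all real numbers u ≥ c ≥ 0 and ψ ≥ 0 one has (u − c)·(ψ^m − c^m)_+ ≤ (1/4)·(u − c)·(u^m − c^m) + γ·(ψ − c)_+·(ψ^m − c^m)_+. -/
open Real Set

private lemma ratio_aux (m : ℝ) (hm0 : 0 < m) (hm1 : m < 1) (c t K : ℝ)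
    (hc : 0 ≤ c) (ht : 0 < t) (hK : 1 ≤ K) :
    K ^ m * ((c + t) ^ m - c ^ m) ≤ (c + K * t) ^ m - c ^ m := by
  set D : ℝ := (c + t) ^ m - c ^ m with hD
  set φ : ℝ → ℝ := fun x => (c + x * t) ^ m - x ^ m * D with hφ
  have hbase : ∀ x : ℝ, 1 ≤ x → 0 < c + x * t := by
    intro x hx; nlinarith
  have hder : ∀ x : ℝ, 1 ≤ x →
      HasDerivAt φ (t * m * (c + x * t) ^ (m - 1) - m * x ^ (m - 1) * D) x := by
    intro x hx
    have h1 : HasDerivAt (fun y : ℝ => c + y * t) t x := by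
      simpa using ((hasDerivAt_id x).mul_const t).const_add c
    have h2 := h1.rpow_const (p := m) (Or.inl (hbase x hx).ne')
    have h3 := (Real.hasDerivAt_rpow_const (x := x) (p := m)
      (Or.inl (by linarith : x ≠ 0))).mul_const D
    exact h2.sub h3
  have hDle : D ≤ t * (c + t) ^ (m - 1) := by
    have e1 : (c + t) ^ m = (c + t) * (c + t) ^ (m - 1) := by
      nth_rewrite 1 [show m = 1 + (m - 1) by ring]
      rw [Real.rpow_add (by linarith), Real.rpow_one]
    have e2 : c * (c + t) ^ (m - 1) ≤ c ^ m := by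
      rcases eq_or_lt_of_le hc with h | h
      · simp [← h, Real.zero_rpow hm0.ne']
      · have := Real.rpow_le_rpow_of_nonpos h (by linarith : c ≤ c + t)
          (by linarith : m - 1 ≤ 0)
        calc c * (c + t) ^ (m - 1) ≤ c * c ^ (m - 1) :=
              mul_le_mul_of_nonneg_left this hc
          _ = c ^ m := by
              nth_rewrite 1 [show c = c ^ (1:ℝ) by rw [Real.rpow_one]]
              rw [← Real.rpow_add h]; ring_nf
    rw [hD]; nlinarith
  have hDnonneg : 0 ≤ D := by
    rw [hD]
    have := Real.rpow_le_rpow hc (by linarith : c ≤ c + t) hm0.le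
    linarith
  have hmono : MonotoneOn φ (Ici 1) := by
    apply monotoneOn_of_deriv_nonneg (convex_Ici 1)
    · intro x hx
      exact (hder x hx).continuousAt.continuousWithinAt
    · intro x hx
      rw [interior_Ici] at hx
      exact ((hder x hx.le).differentiableAt).differentiableWithinAt
    · intro x hx
      rw [interior_Ici] at hx
      rw [(hder x hx.le).deriv]
      have hx1 : (1:ℝ) ≤ x := hx.le
      have hx0 : (0:ℝ) < x := by linarith
      -- key : x^(m-1) * D ≤ t * (c + x*t)^(m-1)
      have key : x ^ (m - 1) * D ≤ t * (c + x * t) ^ (m - 1) := by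
        have e3 : x ^ (m - 1) * (c + t) ^ (m - 1) = (x * (c + t)) ^ (m - 1) :=
          (Real.mul_rpow hx0.le (by linarith)).symm
        have e4 : (x * (c + t)) ^ (m - 1) ≤ (c + x * t) ^ (m - 1) := by
          apply Real.rpow_le_rpow_of_nonpos (hbase x hx1)
            (by nlinarith) (by linarith)
        have e5 : x ^ (m - 1) * D ≤ x ^ (m - 1) * (t * (c + t) ^ (m - 1)) :=
          mul_le_mul_of_nonneg_left hDle (Real.rpow_nonneg hx0.le _)
        calc x ^ (m - 1) * D ≤ x ^ (m - 1) * (t * (c + t) ^ (m - 1)) := e5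
          _ = t * (x * (c + t)) ^ (m - 1) := by rw [← e3]; ring
          _ ≤ t * (c + x * t) ^ (m - 1) :=
              mul_le_mul_of_nonneg_left e4 ht.le
      nlinarith
  have h1K : φ 1 ≤ φ K := hmono (self_mem_Ici) (mem_Ici.2 hK) hK
  have hφ1 : φ 1 = c ^ m := by
    simp [hφ, hD, Real.one_rpow]
  rw [hφ1] at h1K
  simp only [hφ] at h1K
  linarith

theorem stmt_12 (m : ℝ) (hm0 : 0 < m) (hm1 : m < 1) :
    ∃ γ : ℝ, 0 < γ ∧ ∀ u c ψ : ℝ, 0 ≤ c → c ≤ u → 0 ≤ ψ →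
      (u - c) * max (ψ ^ m - c ^ m) 0 ≤
        (1 / 4) * (u - c) * (u ^ m - c ^ m) + γ * max (ψ - c) 0 * max (ψ ^ m - c ^ m) 0 := by
  set K : ℝ := (4:ℝ) ^ (1/m) with hKdef
  have hKpos : 0 < K := Real.rpow_pos_of_pos (by norm_num) _
  have hK4 : (4:ℝ) ≤ K := by
    nth_rewrite 1 [show (4:ℝ) = (4:ℝ) ^ (1:ℝ) by rw [Real.rpow_one]]
    apply Real.rpow_le_rpow_left_iff (by norm_num : (1:ℝ) < 4) |>.2
    rw [le_div_iff₀ hm0]; linarith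
  have hK1 : (1:ℝ) ≤ K := by linarith
  have hKm : K ^ m = 4 := by
    rw [hKdef, ← Real.rpow_mul (by norm_num : (0:ℝ) ≤ 4)]
    rw [show 1/m * m = 1 by field_simp]
    exact Real.rpow_one 4
  refine ⟨K, hKpos, ?_⟩
  intro u c ψ hc hcu hψ
  have hB : 0 ≤ u ^ m - c ^ m := sub_nonneg.2 (Real.rpow_le_rpow hc hcu hm0.le)
  have hs : 0 ≤ u - c := by linarith
  by_cases hA : ψ ^ m - c ^ m ≤ 0
  · rw [max_eq_right hA]
    have : 0 ≤ 1 / 4 * (u - c) * (u ^ m - c ^ m) := by positivity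
    nlinarith
  · push_neg at hA
    have hcψ : c < ψ := by
      by_contra h
      push_neg at h
      have := Real.rpow_le_rpow hψ h hm0.le
      linarith
    rw [max_eq_left hA.le, max_eq_left (by linarith : 0 ≤ ψ - c)]
    rcases le_or_gt ((u - c) / K) (ψ - c) with h | h
    · have h' : u - c ≤ K * (ψ - c) := by
        rw [div_le_iff₀ hKpos] at h; linarith
      have h2 : (u - c) * (ψ ^ m - c ^ m) ≤ K * (ψ - c) * (ψ ^ m - c ^ m) :=
        mul_le_mul_of_nonneg_right h' hA.le
      nlinarith
    · have ht : 0 < ψ - c := by linarith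
      have hsK : 0 < (u - c) / K := lt_trans ht h
      have hs' : 0 < u - c := by
        rw [div_pos_iff] at hsK
        rcases hsK with ⟨h1, _⟩ | ⟨_, h2⟩
        · exact h1
        · linarith
      set t : ℝ := (u - c) / K with htdef
      have hct : c + K * t = u := by
        rw [htdef, mul_comm, div_mul_cancel₀ _ hKpos.ne']; ring
      have hratio := ratio_aux m hm0 hm1 c t K hc hsK hK1
      rw [hct, hKm] at hratio
      have hψle : ψ ≤ c + t := by linarith [h]
      have hψm : ψ ^ m ≤ (c + t) ^ m := Real.rpow_le_rpow hψ hψle hm0.le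
      -- so 4 * (ψ^m - c^m) ≤ u^m - c^m
      have h4 : 4 * (ψ ^ m - c ^ m) ≤ u ^ m - c ^ m := by linarith
      have hpos2 : 0 ≤ K * (ψ - c) * (ψ ^ m - c ^ m) := by positivity
      nlinarith
end

section
/- Let 0 < m < 1. There exists a constant γ > 0, depending only on m, such that for all real numbers u ≥ c ≥ 0 and ψ ≥ 0 one has (ψ − c)_+·(u^m − c^m) ≤ (1/4)·(u − c)·(u^m − c^m) + γ·(ψ − c)_+·(ψ^m − c^m)_+. -/
theorem stmt_13 (m : ℝ) (hm0 : 0 < m) (hm1 : m < 1) :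
    ∃ γ : ℝ, 0 < γ ∧ ∀ u c ψ : ℝ, 0 ≤ c → c ≤ u → 0 ≤ ψ →
      max (ψ - c) 0 * (u ^ m - c ^ m) ≤
        (1 / 4) * (u - c) * (u ^ m - c ^ m) + γ * max (ψ - c) 0 * max (ψ ^ m - c ^ m) 0 := by
  refine ⟨4, by norm_num, ?_⟩
  intro u c ψ hc hcu hψ
  have hu : 0 ≤ u := le_trans hc hcu
  have hum : c ^ m ≤ u ^ m := Real.rpow_le_rpow hc hcu hm0.le
  by_cases hψc : ψ ≤ c
  · rw [max_eq_right (by linarith : ψ - c ≤ 0)]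
    have h2 : 0 ≤ max (ψ ^ m - c ^ m) 0 := le_max_right _ _
    nlinarith
  · push_neg at hψc
    have hψm : c ^ m ≤ ψ ^ m := Real.rpow_le_rpow hc hψc.le hm0.le
    rw [max_eq_left (by linarith : (0:ℝ) ≤ ψ - c), max_eq_left (by linarith : (0:ℝ) ≤ ψ ^ m - c ^ m)]
    by_cases h4 : ψ - c < (1/4) * (u - c)
    · nlinarith
    · push_neg at h4
      -- Claim: u ^ m - c ^ m ≤ 4 * (ψ ^ m - c ^ m)
      have key : u ^ m - c ^ m ≤ 4 * (ψ ^ m - c ^ m) := by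
        by_cases huψ : u ≤ ψ
        · have : u ^ m ≤ ψ ^ m := Real.rpow_le_rpow hu huψ hm0.le
          linarith
        · push_neg at huψ
          have hcu' : c < u := lt_trans hψc huψ
          have hd : 0 < u - c := by linarith
          -- concavity: ψ = a*c + b*u with a = (u-ψ)/(u-c), b = (ψ-c)/(u-c)
          have hcon := (Real.concaveOn_rpow hm0.le hm1.le).2
            (Set.mem_Ici.2 hc) (Set.mem_Ici.2 hu)
            (show (0:ℝ) ≤ (u - ψ)/(u - c) from div_nonneg (by linarith) hd.le)
            (show (0:ℝ) ≤ (ψ - c)/(u - c) from div_nonneg (by linarith) hd.le)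
            (by field_simp; ring)
          have hcomb : (u - ψ)/(u - c) * c + (ψ - c)/(u - c) * u = ψ := by
            field_simp; ring
          simp only [smul_eq_mul, hcomb] at hcon
          have h2 : (u - ψ)/(u - c) * c ^ m + (ψ - c)/(u - c) * c ^ m = c ^ m := by
            field_simp
            ring
          have hkey2 : (ψ - c)/(u - c) * (u ^ m - c ^ m) ≤ ψ ^ m - c ^ m := by
            nlinarith [hcon, h2]
          have hb : (1:ℝ)/4 ≤ (ψ - c)/(u - c) := by
            rw [le_div_iff₀ hd]; linarith
          nlinarith
      nlinarith
end

section
/- Let 0 < m < 1. There exists a constant γ > 0, depending only on m, such that for all real numbers c ≥ 0, ψ ≥ 0 and u ≥ ψ_c, where ψ_c = max(c, ψ), one has (u − c)·(u^m − c^m) ≤ 2·(u − ψ_c)·(u^m − ψ_c^m) + γ·(ψ − c)_+·(ψ^m − c^m)_+. -/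
open Real

/-- Tangent line inequality for the concave function `x ↦ x ^ m`, `0 < m < 1`. -/
lemma rpow_tangent_aux {m x y : ℝ} (hm0 : 0 < m) (hm1 : m < 1) (hy : 0 < y) (hx : 0 ≤ x) :
    x ^ m ≤ y ^ m + m * y ^ (m - 1) * (x - y) := by
  have hs : (-1 : ℝ) ≤ (x - y) / y := by
    rw [le_div_iff₀ hy]; linarith
  have h := rpow_one_add_le_one_add_mul_self hs hm0.le hm1.le
  have h1 : 1 + (x - y) / y = x / y := by field_simp; ring
  rw [h1, Real.div_rpow hx hy.le] at h
  have hym : (0 : ℝ) < y ^ m := Real.rpow_pos_of_pos hy m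
  have h2 := mul_le_mul_of_nonneg_left h hym.le
  calc x ^ m = y ^ m * (x ^ m / y ^ m) := by field_simp
    _ ≤ y ^ m * (1 + m * ((x - y) / y)) := h2
    _ = y ^ m + m * y ^ (m - 1) * (x - y) := by
        rw [Real.rpow_sub hy, Real.rpow_one]; field_simp

set_option maxHeartbeats 1000000 in
/-- Core inequality in the case `0 ≤ c < ψ ≤ u`. -/
lemma core_aux {m : ℝ} (hm0 : 0 < m) (hm1 : m < 1) (c ψ u : ℝ)
    (hc : 0 ≤ c) (hcψ : c < ψ) (hψu : ψ ≤ u) :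
    (u - ψ) * (ψ ^ m - c ^ m) + (ψ - c) * (u ^ m - ψ ^ m) ≤
      (u - ψ) * (u ^ m - ψ ^ m)
        + (4 * (2 : ℝ) ^ (1 / m) - 1) * ((ψ - c) * (ψ ^ m - c ^ m)) := by
  set T : ℝ := (2 : ℝ) ^ (1 / m) with hTdef
  have hm1' : (1 : ℝ) ≤ 1 / m := by
    rw [le_div_iff₀ hm0]; linarith
  have hT2 : (2 : ℝ) ≤ T := by
    calc (2 : ℝ) = (2 : ℝ) ^ (1 : ℝ) := (Real.rpow_one 2).symm
      _ ≤ T := (Real.rpow_le_rpow_left_iff one_lt_two).mpr hm1'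
  have hT0 : (0 : ℝ) < T := by linarith
  have hTm : T ^ m = 2 := by
    rw [hTdef, ← Real.rpow_mul (by norm_num), one_div, inv_mul_cancel₀ hm0.ne', Real.rpow_one]
  have hψ0 : 0 < ψ := lt_of_le_of_lt hc hcψ
  have hu0 : 0 < u := lt_of_lt_of_le hψ0 hψu
  have ha : 0 < ψ - c := by linarith
  have hb : 0 < ψ ^ m - c ^ m := by
    have := Real.rpow_lt_rpow hc hcψ hm0; linarith
  have hA : 0 ≤ u - ψ := by linarith
  have hB : 0 ≤ u ^ m - ψ ^ m := by
    have := Real.rpow_le_rpow hψ0.le hψu hm0.le; linarith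
  rcases le_or_gt (u - ψ) (ψ - c) with hAa | hAa
  · -- Case I : A ≤ a, hence B ≤ b by concavity
    have hmem1 : c ∈ Set.Ici (0 : ℝ) := hc
    have hmem2 : u ∈ Set.Ici (0 : ℝ) := hu0.le
    have hmid := (Real.concaveOn_rpow hm0.le hm1.le).2 hmem1 hmem2
      (by norm_num : (0:ℝ) ≤ 1/2) (by norm_num : (0:ℝ) ≤ 1/2) (by norm_num)
    simp only [smul_eq_mul] at hmid
    have hmono : ((1:ℝ)/2 * c + 1/2 * u) ^ m ≤ ψ ^ m := by
      apply Real.rpow_le_rpow (by linarith) (by linarith) hm0.le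
    have hBb : u ^ m - ψ ^ m ≤ ψ ^ m - c ^ m := by linarith
    nlinarith [mul_le_mul_of_nonneg_right hAa hb.le,
      mul_le_mul_of_nonneg_left hBb ha.le, mul_nonneg hA hB, mul_pos ha hb]
  · -- Case II : a < A
    rcases le_or_gt (ψ ^ m - c ^ m) (u ^ m - ψ ^ m) with hbB | hbB
    · -- II.1 : b ≤ B
      have h1 : (ψ - c) * ((u ^ m - ψ ^ m) - (ψ ^ m - c ^ m)) ≤
          (u - ψ) * ((u ^ m - ψ ^ m) - (ψ ^ m - c ^ m)) :=
        mul_le_mul_of_nonneg_right hAa.le (by linarith)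
      nlinarith [mul_pos ha hb]
    · -- II.2 : B < b
      have hcm : (0:ℝ) ≤ c ^ m := Real.rpow_nonneg hc m
      have hum2 : u ^ m ≤ (T * ψ) ^ m := by
        rw [Real.mul_rpow hT0.le hψ0.le, hTm]; linarith
      have huT : u ≤ T * ψ :=
        (Real.rpow_le_rpow_iff hu0.le (by positivity) hm0).mp hum2
      -- it suffices to bound A * b
      have key : (u - ψ) * (ψ ^ m - c ^ m) ≤ (4 * T - 2) * ((ψ - c) * (ψ ^ m - c ^ m)) := by
        rcases le_or_gt c (ψ / 2) with hc2 | hc2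
        · -- II.2a : c ≤ ψ/2, so ψ ≤ 2(ψ - c)
          have hA2 : u - ψ ≤ (2 * T - 2) * (ψ - c) := by nlinarith
          have := mul_le_mul_of_nonneg_right hA2 hb.le
          nlinarith [mul_pos ha hb]
        · -- II.2b : ψ/2 < c
          have hc0 : 0 < c := by linarith
          have hAa2 : u - ψ ≤ T * (ψ - c) := by
            by_contra hcon
            push_neg at hcon
            have ht1 := rpow_tangent_aux hm0 hm1 hc0 hψ0.le
            -- b ≤ m c^(m-1) a
            have hb_up : ψ ^ m - c ^ m ≤ m * c ^ (m - 1) * (ψ - c) := by linarith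
            have ht2 := rpow_tangent_aux hm0 hm1 hu0 hψ0.le
            -- B ≥ m u^(m-1) A
            have hB_lo : m * u ^ (m - 1) * (u - ψ) ≤ u ^ m - ψ ^ m := by linarith
            -- c ≥ u / (2T)
            have hcu : u / (2 * T) ≤ c := by
              rw [div_le_iff₀ (by positivity)]; nlinarith
            have hup : (0:ℝ) < u ^ (m - 1) := Real.rpow_pos_of_pos hu0 _
            -- c^(m-1) ≤ (u/(2T))^(m-1) = u^(m-1) * (2T)^(1-m)
            have hstep : c ^ (m - 1) ≤ u ^ (m - 1) * (2 * T) ^ (1 - m) := by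
              have h3 : c ^ (m - 1) ≤ (u / (2 * T)) ^ (m - 1) :=
                Real.rpow_le_rpow_of_nonpos (by positivity) hcu (by linarith)
              have h4 : (u / (2 * T)) ^ (m - 1)
                  = u ^ (m - 1) * (2 * T) ^ (1 - m) := by
                rw [Real.div_rpow hu0.le (by positivity), div_eq_mul_inv,
                  ← Real.rpow_neg (by positivity)]
                ring_nf
              linarith [h4 ▸ h3]
            -- (2T)^(1-m) ≤ T
            have hTT : (2 * T) ^ (1 - m) ≤ T := by
              have h2T : (2 : ℝ) * T = (2 : ℝ) ^ (1 + 1 / m) := by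
                rw [Real.rpow_add (by norm_num), Real.rpow_one, hTdef]
              rw [h2T, ← Real.rpow_mul (by norm_num : (0:ℝ) ≤ 2)]
              rw [hTdef]
              apply (Real.rpow_le_rpow_left_iff one_lt_two).mpr
              have : (1 + 1 / m) * (1 - m) = 1 / m - m := by field_simp; ring
              rw [this]; linarith
            -- combine : b ≤ m c^(m-1) a ≤ m T u^(m-1) a < m u^(m-1) A ≤ B < b
            have hchain : m * c ^ (m - 1) * (ψ - c) ≤ m * (u ^ (m-1) * T) * (ψ - c) := by
              apply mul_le_mul_of_nonneg_right _ ha.le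
              apply mul_le_mul_of_nonneg_left _ hm0.le
              calc c ^ (m - 1) ≤ u ^ (m - 1) * (2 * T) ^ (1 - m) := hstep
                _ ≤ u ^ (m - 1) * T := by
                    exact mul_le_mul_of_nonneg_left hTT hup.le
            have hlast : m * (u ^ (m-1) * T) * (ψ - c) < m * u ^ (m - 1) * (u - ψ) := by
              have h5 := mul_lt_mul_of_pos_left hcon (by positivity : (0:ℝ) < m * u ^ (m-1))
              calc m * (u ^ (m-1) * T) * (ψ - c) = m * u ^ (m-1) * (T * (ψ - c)) := by ring
                _ < m * u ^ (m-1) * (u - ψ) := h5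
            linarith
          have := mul_le_mul_of_nonneg_right hAa2 hb.le
          nlinarith [mul_pos ha hb]
      have haB : (ψ - c) * (u ^ m - ψ ^ m) ≤ (ψ - c) * (ψ ^ m - c ^ m) :=
        mul_le_mul_of_nonneg_left hbB.le ha.le
      nlinarith [mul_nonneg hA hB, mul_pos ha hb]

theorem stmt_14 (m : ℝ) (hm0 : 0 < m) (hm1 : m < 1) :
    ∃ γ : ℝ, 0 < γ ∧ ∀ c ψ u : ℝ, 0 ≤ c → 0 ≤ ψ → max c ψ ≤ u →
      (u - c) * (u ^ m - c ^ m) ≤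
        2 * (u - max c ψ) * (u ^ m - (max c ψ) ^ m)
          + γ * max (ψ - c) 0 * max (ψ ^ m - c ^ m) 0 := by
  refine ⟨4 * (2 : ℝ) ^ (1 / m), by positivity, fun c ψ u hc hψ hu => ?_⟩
  rcases le_or_gt ψ c with hcψ | hcψ
  · -- ψ ≤ c : max c ψ = c and the extra terms vanish
    rw [max_eq_left hcψ] at hu ⊢
    have hcu : c ≤ u := hu
    have h1 : max (ψ - c) 0 = 0 := max_eq_right (by linarith)
    have h2 : ψ ^ m ≤ c ^ m := Real.rpow_le_rpow hψ hcψ hm0.le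
    have h3 : c ^ m ≤ u ^ m := Real.rpow_le_rpow hc hcu hm0.le
    rw [h1]
    have h4 : 0 ≤ (u - c) * (u ^ m - c ^ m) :=
      mul_nonneg (by linarith) (by linarith)
    nlinarith
  · -- c < ψ : max c ψ = ψ
    rw [max_eq_right hcψ.le] at hu ⊢
    have hψu : ψ ≤ u := hu
    have h2 : c ^ m ≤ ψ ^ m := Real.rpow_le_rpow hc hcψ.le hm0.le
    rw [max_eq_left (by linarith : (0:ℝ) ≤ ψ - c), max_eq_left (by linarith : (0:ℝ) ≤ ψ ^ m - c ^ m)]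
    have key := core_aux hm0 hm1 c ψ u hc hcψ hψu
    nlinarith [key]
end

section
/- Let (X, μ) be a measure space, let f : X → [0,∞] be measurable, and let k > 0 and ε > 0 be real numbers. Then ∫_0^k λ^{ε−1} · ( ∫_{{x : f(x) > λ}} f dμ ) dλ = (1/ε) · ∫_X f · (min(f, k))^ε dμ, where all integrals are Lebesgue integrals with values in the extended nonnegative reals. -/
open MeasureTheory ENNReal

theorem stmt_19 {X : Type*} [MeasurableSpace X] (μ : Measure X)
    (f : X → ℝ≥0∞) (hf : Measurable f) (k ε : ℝ) (hk : 0 < k) (hε : 0 < ε) :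
    (∫⁻ l in Set.Ioo (0 : ℝ) k, ENNReal.ofReal (l ^ (ε - 1)) *
        (∫⁻ x in {x | ENNReal.ofReal l < f x}, f x ∂μ)) =
      ENNReal.ofReal (1 / ε) * ∫⁻ x, f x * (min (f x) (ENNReal.ofReal k)) ^ ε ∂μ := by
  set ν := μ.withDensity f with hν
  set F : X → ℝ := fun x => (min (f x) (ENNReal.ofReal k)).toReal with hF
  have hmin_ne_top : ∀ x, min (f x) (ENNReal.ofReal k) ≠ ∞ := fun x =>
    ne_top_of_le_ne_top ofReal_ne_top (min_le_right _ _)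
  have hF_mble : Measurable F := (hf.min measurable_const).ennreal_toReal
  have hF_nn : 0 ≤ᵐ[ν] F := Filter.Eventually.of_forall fun x => ENNReal.toReal_nonneg
  have key := lintegral_rpow_eq_lintegral_meas_lt_mul ν hF_nn hF_mble.aemeasurable hε
  -- identify the ν-integral with the μ-integral on the RHS
  have hRHS : ∫⁻ x, ENNReal.ofReal (F x ^ ε) ∂ν
      = ∫⁻ x, f x * (min (f x) (ENNReal.ofReal k)) ^ ε ∂μ := by
    rw [hν, lintegral_withDensity_eq_lintegral_mul μ hf
      ((hF_mble.pow_const ε).ennreal_ofReal)]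
    refine lintegral_congr fun x => ?_
    have : ENNReal.ofReal (F x ^ ε) = (min (f x) (ENNReal.ofReal k)) ^ ε := by
      rw [← ENNReal.ofReal_rpow_of_nonneg ENNReal.toReal_nonneg hε.le,
        ENNReal.ofReal_toReal (hmin_ne_top x)]
    simp [this]
  -- identify the t-integral with the LHS
  have hsets : ∀ t ∈ Set.Ioo (0:ℝ) k, {a | t < F a} = {a | ENNReal.ofReal t < f a} := by
    intro t ht
    ext a
    simp only [Set.mem_setOf_eq, hF]
    rw [← ENNReal.ofReal_lt_iff_lt_toReal ht.1.le (hmin_ne_top a), lt_min_iff]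
    constructor
    · exact fun h => h.1
    · exact fun h => ⟨h, (ENNReal.ofReal_lt_ofReal_iff hk).mpr ht.2⟩
  have hIoi : ∫⁻ t in Set.Ioi (0:ℝ), ν {a | t < F a} * ENNReal.ofReal (t ^ (ε - 1))
      = ∫⁻ l in Set.Ioo (0 : ℝ) k, ENNReal.ofReal (l ^ (ε - 1)) *
        (∫⁻ x in {x | ENNReal.ofReal l < f x}, f x ∂μ) := by
    rw [← Set.Ioo_union_Ici_eq_Ioi hk, lintegral_union measurableSet_Ici
      (((Set.Iio_disjoint_Ici le_rfl).mono_left Set.Ioo_subset_Iio_self))]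
    have h0 : ∫⁻ t in Set.Ici k, ν {a | t < F a} * ENNReal.ofReal (t ^ (ε - 1)) = 0 := by
      rw [setLIntegral_congr_fun measurableSet_Ici
        (fun t (ht : t ∈ Set.Ici k) => ?_), lintegral_zero]
      have : {a | t < F a} = (∅ : Set X) := by
        ext a
        simp only [Set.mem_setOf_eq, Set.mem_empty_iff_false, iff_false, not_lt, hF]
        calc (min (f a) (ENNReal.ofReal k)).toReal
            ≤ (ENNReal.ofReal k).toReal := ENNReal.toReal_mono ofReal_ne_top (min_le_right _ _)
          _ = k := ENNReal.toReal_ofReal hk.le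
          _ ≤ t := ht
      simp [this]
    rw [h0, add_zero]
    refine setLIntegral_congr_fun measurableSet_Ioo
      (fun t ht => ?_)
    rw [hsets t ht, mul_comm, hν,
      withDensity_apply f (measurableSet_lt measurable_const hf)]
  rw [hIoi, hRHS] at key
  rw [key, ← mul_assoc, ← ENNReal.ofReal_mul (by positivity),
    one_div_mul_cancel hε.ne', ENNReal.ofReal_one, one_mul]
end
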